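/- Let n ≥ 1, let C ⊆ ℝ^{n+1} be a strictly convex sharp convex cone, and let A ∈ GL(n+1,ℝ) be parabolic for C: A preserves C, no v ∈ C satisfies A·v = λ·v with λ > 0, and every complex eigenvalue of A has modulus 1. Then A fixes exactly one boundary ray: there exists a nonzero vector v in the frontier of C with A·v = v, and every nonzero w in the frontier of C satisfying A·w = μ·w for some μ > 0 is a positive scalar multiple of v. -/

import Mathlib

open Matrix Polynomial
open scoped Pointwise

/-- `C ⊆ ℝ^{n+1}` is a sharp convex cone: nonempty, open, convex, invariant under
positive scaling, and its closure contains no line through the origin. -/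
def IsSharpConvexCone (n : ℕ) (C : Set (Fin (n + 1) → ℝ)) : Prop :=
  C.Nonempty ∧ IsOpen C ∧ Convex ℝ C ∧
    (∀ t : ℝ, 0 < t → t • C = C) ∧
    closure C ∩ (-(closure C)) = {0}

/-- A sharp convex cone is strictly convex if the sum of any two nonzero frontier
vectors lying on different rays belongs to the open cone (∂Ω contains no segment). -/
def IsStrictlyConvexCone (n : ℕ) (C : Set (Fin (n + 1) → ℝ)) : Prop :=
  IsSharpConvexCone n C ∧
    ∀ x y : Fin (n + 1) → ℝ, x ∈ frontier C → y ∈ frontier C → x ≠ 0 → y ≠ 0 →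
      (¬ ∃ t : ℝ, 0 < t ∧ y = t • x) → x + y ∈ C

/-- The matrix `A` preserves the cone `C`. -/
def PreservesCone (n : ℕ) (A : Matrix (Fin (n + 1)) (Fin (n + 1)) ℝ)
    (C : Set (Fin (n + 1) → ℝ)) : Prop :=
  A.mulVec '' C = C

/-- The multiset of complex eigenvalues (roots of the characteristic polynomial
over `ℂ`, with multiplicity) of a real square matrix. -/
noncomputable def cEigenvalues (n : ℕ) (A : Matrix (Fin (n + 1)) (Fin (n + 1)) ℝ) :
    Multiset ℂ :=
  ((A.charpoly).map (algebraMap ℝ ℂ)).roots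

set_option maxHeartbeats 1000000

open Filter Set
open scoped Topology ENNReal NNReal

section Aux

variable {d : ℕ} {C : Set (Fin (d + 1) → ℝ)}

lemma cone_smul_mem (hsc : ∀ t : ℝ, 0 < t → t • C = C)
    {x : Fin (d+1) → ℝ} (hx : x ∈ C) {t : ℝ} (ht : 0 < t) : t • x ∈ C :=
  (hsc t ht) ▸ Set.smul_mem_smul_set hx

lemma cone_closure_smul_mem (hsc : ∀ t : ℝ, 0 < t → t • C = C)
    {x : Fin (d+1) → ℝ} (hx : x ∈ closure C) {t : ℝ} (ht : 0 < t) :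
    t • x ∈ closure C := by
  have h1 : t • closure C ⊆ closure (t • C) := smul_closure_subset t C
  have := h1 (Set.smul_mem_smul_set hx)
  rwa [hsc t ht] at this

lemma cone_zero_mem_closure (hsharp : closure C ∩ (-(closure C)) = {0}) :
    (0 : Fin (d+1) → ℝ) ∈ closure C := by
  have : (0 : Fin (d+1) → ℝ) ∈ ({0} : Set (Fin (d+1) → ℝ)) := rfl
  rw [← hsharp] at this
  exact this.1

lemma cone_sharp_eq_zero (hsharp : closure C ∩ (-(closure C)) = {0})
    {x : Fin (d+1) → ℝ} (hx : x ∈ closure C) (hx' : -x ∈ closure C) : x = 0 := by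
  have : x ∈ closure C ∩ (-(closure C)) := ⟨hx, by simpa using hx'⟩
  rw [hsharp] at this
  exact this

lemma cone_add_mem (hCc : Convex ℝ C) (hsc : ∀ t : ℝ, 0 < t → t • C = C)
    {x y : Fin (d+1) → ℝ} (hx : x ∈ C) (hy : y ∈ C) : x + y ∈ C := by
  have h := hCc hx hy (by norm_num : (0:ℝ) ≤ 1/2) (by norm_num : (0:ℝ) ≤ 1/2) (by norm_num)
  have h2 : (2:ℝ) • ((1/2 : ℝ) • x + (1/2 : ℝ) • y) ∈ C := cone_smul_mem hsc h two_pos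
  rw [smul_add, smul_smul, smul_smul] at h2
  norm_num at h2
  exact h2

lemma cone_closure_add_mem (hCc : Convex ℝ C) (hsc : ∀ t : ℝ, 0 < t → t • C = C)
    {x y : Fin (d+1) → ℝ} (hx : x ∈ closure C) (hy : y ∈ closure C) :
    x + y ∈ closure C :=
  map_mem_closure₂ continuous_add hx hy fun a ha b hb => cone_add_mem hCc hsc ha hb

lemma cone_zero_not_mem (hCo : IsOpen C)
    (hsharp : closure C ∩ (-(closure C)) = {0}) : (0 : Fin (d+1) → ℝ) ∉ C := by
  intro h0
  obtain ⟨x, hx⟩ := exists_ne (0 : Fin (d+1) → ℝ)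
  obtain ⟨r, hr, hball⟩ := Metric.isOpen_iff.mp hCo 0 h0
  set y := (r / (2 * ‖x‖)) • x with hy
  have hxnorm : 0 < ‖x‖ := norm_pos_iff.mpr hx
  have hyne : y ≠ 0 := smul_ne_zero (by positivity) hx
  have hynorm : ‖y‖ < r := by
    rw [hy, norm_smul, Real.norm_eq_abs, abs_of_pos (by positivity)]
    rw [div_mul_eq_mul_div, mul_comm]
    rw [div_lt_iff₀ (by positivity)]
    nlinarith
  have hyC : y ∈ C := hball (by simpa [Metric.mem_ball] using hynorm)
  have hmyC : -y ∈ C := hball (by simp [Metric.mem_ball, hynorm.le]; simpa using hynorm)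
  exact hyne (cone_sharp_eq_zero hsharp (subset_closure hyC) (subset_closure hmyC))

lemma cone_add_closure_mem (hCo : IsOpen C) (hCc : Convex ℝ C)
    (hsc : ∀ t : ℝ, 0 < t → t • C = C)
    {x y : Fin (d+1) → ℝ} (hx : x ∈ C) (hy : y ∈ closure C) :
    x + y ∈ C := by
  have hi : x ∈ interior C := by rwa [hCo.interior_eq]
  have h := hCc.combo_interior_closure_mem_interior hi hy (by norm_num : (0:ℝ) < 1/2)
    (by norm_num : (0:ℝ) ≤ 1/2) (by norm_num)
  rw [hCo.interior_eq] at h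
  have h2 : (2:ℝ) • ((1/2 : ℝ) • x + (1/2 : ℝ) • y) ∈ C := cone_smul_mem hsc h two_pos
  rw [smul_add, smul_smul, smul_smul] at h2
  norm_num at h2
  exact h2


lemma exists_pos_functional (hCne : C.Nonempty) (hCo : IsOpen C)
    (hCc : Convex ℝ C) (hsc : ∀ t : ℝ, 0 < t → t • C = C)
    (hsharp : closure C ∩ (-(closure C)) = {0}) :
    ∃ (φ : (Fin (d+1) → ℝ) →L[ℝ] ℝ) (c : ℝ), 0 < c ∧
      ∀ x ∈ closure C, c * ‖x‖ ≤ φ x := by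
  classical
  set S : Set (Fin (d+1) → ℝ) := closure C ∩ Metric.sphere 0 1 with hS
  have hScomp : IsCompact S := (isCompact_sphere (0 : Fin (d+1) → ℝ) 1).inter_left isClosed_closure
  have hsep : ∀ z : S, ∃ f : (Fin (d+1) → ℝ) →L[ℝ] ℝ,
      (∀ b ∈ closure C, 0 ≤ f b) ∧ 0 < f z := by
    rintro ⟨z, hz1, hz2⟩
    have hzn : ‖z‖ = 1 := by simpa using hz2
    have hznz : z ≠ 0 := by intro h; rw [h] at hzn; simp at hzn
    have hnz : -z ∉ closure C := fun h =>
      hznz (cone_sharp_eq_zero hsharp hz1 (by simpa using h))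
    obtain ⟨f, u, hfu, hb⟩ := geometric_hahn_banach_point_closed
      hCc.closure isClosed_closure hnz
    have hu0 : u < 0 := by simpa using hb 0 (cone_zero_mem_closure hsharp)
    refine ⟨f, ?_, ?_⟩
    · intro b hbC
      by_contra hneg
      push_neg at hneg
      have hkey : ∀ t : ℝ, 0 < t → u < t * f b := fun t ht => by
        simpa [_root_.map_smul, smul_eq_mul] using hb (t • b) (cone_closure_smul_mem hsc hbC ht)
      have ht : 0 < 2 * u / f b := div_pos_of_neg_of_neg (by linarith) hneg
      have h1 := hkey _ ht
      rw [div_mul_cancel₀ _ (ne_of_lt hneg)] at h1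
      linarith
    · have h2 : -f z < u := by simpa using hfu
      simp only []
      linarith
  choose f hf0 hfpos using hsep
  have hUopen : ∀ z : S, IsOpen {y : Fin (d+1) → ℝ | 0 < f z y} := fun z =>
    isOpen_lt continuous_const (f z).continuous
  have hcover : S ⊆ ⋃ z : S, {y | 0 < f z y} := fun y hy =>
    Set.mem_iUnion.mpr ⟨⟨y, hy⟩, hfpos ⟨y, hy⟩⟩
  obtain ⟨t, ht⟩ := hScomp.elim_finite_subcover _ hUopen hcover
  set φ : (Fin (d+1) → ℝ) →L[ℝ] ℝ := ∑ z ∈ t, f z with hφ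
  have hφapp : ∀ y, φ y = ∑ z ∈ t, f z y := fun y => by
    rw [hφ]; exact ContinuousLinearMap.sum_apply _ _ _
  have hφ0 : ∀ b ∈ closure C, 0 ≤ φ b := fun b hb => by
    rw [hφapp]; exact Finset.sum_nonneg fun z _ => hf0 z b hb
  have hφpos : ∀ y ∈ S, 0 < φ y := by
    intro y hy
    have := ht hy
    simp only [Set.mem_iUnion] at this
    obtain ⟨z, hzt, hzy⟩ := this
    rw [hφapp]
    exact Finset.sum_pos' (fun i _ => hf0 i y hy.1) ⟨z, hzt, hzy⟩
  -- S is nonempty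
  obtain ⟨u, huC⟩ := hCne
  have hune : u ≠ 0 := fun h => cone_zero_not_mem hCo hsharp (h ▸ huC)
  have hunorm : 0 < ‖u‖ := norm_pos_iff.mpr hune
  have hz₁ : (‖u‖⁻¹ • u) ∈ S := by
    constructor
    · exact cone_closure_smul_mem hsc (subset_closure huC) (by positivity)
    · simp [norm_smul, abs_of_pos (inv_pos.mpr hunorm), inv_mul_cancel₀ (ne_of_gt hunorm)]
  obtain ⟨z₀, hz₀S, hmin⟩ := hScomp.exists_isMinOn ⟨_, hz₁⟩ φ.continuous.continuousOn
  refine ⟨φ, φ z₀, hφpos z₀ hz₀S, ?_⟩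
  intro x hx
  rcases eq_or_ne x 0 with rfl | hx0
  · simp
  have hxnorm : 0 < ‖x‖ := norm_pos_iff.mpr hx0
  have hyS : (‖x‖⁻¹ • x) ∈ S := by
    constructor
    · exact cone_closure_smul_mem hsc hx (by positivity)
    · simp [norm_smul, abs_of_pos (inv_pos.mpr hxnorm), inv_mul_cancel₀ (ne_of_gt hxnorm)]
  have h1 : φ z₀ ≤ φ (‖x‖⁻¹ • x) := hmin hyS
  have h2 : φ (‖x‖⁻¹ • x) = ‖x‖⁻¹ * φ x := φ.map_smul _ _
  rw [h2] at h1
  calc φ z₀ * ‖x‖ ≤ (‖x‖⁻¹ * φ x) * ‖x‖ := by nlinarith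
    _ = φ x := by field_simp


end Aux

section Spectral

variable {n : ℕ}

lemma charpoly_eval' {K : Type*} [Field K] {m : ℕ} (B : Matrix (Fin m) (Fin m) K) (z : K) :
    B.charpoly.eval z = (Matrix.scalar (Fin m) z - B).det := by
  rw [Matrix.charpoly, _root_.eval_det, matPolyEquiv_charmatrix]
  simp

lemma charpoly_c_ne (M : Matrix (Fin (n+1)) (Fin (n+1)) ℝ) :
    (M.charpoly).map (algebraMap ℝ ℂ) ≠ 0 :=
  (M.charpoly_monic.map (algebraMap ℝ ℂ)).ne_zero

lemma charpoly_map_eq (M : Matrix (Fin (n+1)) (Fin (n+1)) ℝ) :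
    (M.map (algebraMap ℝ ℂ)).charpoly = (M.charpoly).map (algebraMap ℝ ℂ) :=
  Matrix.charpoly_map M (algebraMap ℝ ℂ)

lemma spectrum_subset_cEigen (M : Matrix (Fin (n+1)) (Fin (n+1)) ℝ) (z : ℂ)
    (hz : z ∈ spectrum ℂ (M.map (algebraMap ℝ ℂ))) : z ∈ cEigenvalues n M := by
  rw [spectrum.mem_iff] at hz
  rw [Matrix.isUnit_iff_isUnit_det, isUnit_iff_ne_zero, not_ne_iff] at hz
  have hroot : ((M.map (algebraMap ℝ ℂ)).charpoly).IsRoot z := by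
    rw [Polynomial.IsRoot, charpoly_eval']
    convert hz using 2
    · rfl
    · rfl
  rw [charpoly_map_eq] at hroot
  rw [cEigenvalues, Polynomial.mem_roots (charpoly_c_ne M)]
  exact hroot

lemma real_eigen_mem_cEigen (M : Matrix (Fin (n+1)) (Fin (n+1)) ℝ) (μ : ℝ)
    (w : Fin (n+1) → ℝ) (hw : w ≠ 0) (h : M.mulVec w = μ • w) :
    (μ : ℂ) ∈ cEigenvalues n M := by
  have hdet : (Matrix.scalar (Fin (n+1)) μ - M).det = 0 := by
    rw [← Matrix.exists_mulVec_eq_zero_iff]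
    refine ⟨w, hw, ?_⟩
    rw [Matrix.sub_mulVec, h]
    have : (Matrix.scalar (Fin (n+1)) μ).mulVec w = μ • w := by
      simp [Matrix.scalar, Matrix.diagonal_mulVec_single]
      ext i
      simp [Matrix.mulVec_diagonal]
    rw [this]; simp
  have hroot : (M.charpoly).IsRoot μ := by rw [Polynomial.IsRoot, charpoly_eval', hdet]
  rw [cEigenvalues, Polynomial.mem_roots (charpoly_c_ne M)]
  have h2 := Polynomial.eval₂_at_apply (p := M.charpoly) (algebraMap ℝ ℂ) μ
  rw [Polynomial.IsRoot] at hroot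
  rw [Polynomial.IsRoot, Polynomial.eval_map]
  simpa [hroot] using h2

lemma exists_complex_eigenpair (M : Matrix (Fin (n+1)) (Fin (n+1)) ℝ) :
    ∃ (z : ℂ) (w : Fin (n+1) → ℂ), w ≠ 0 ∧ z ∈ cEigenvalues n M ∧
      (M.map (algebraMap ℝ ℂ)).mulVec w = z • w := by
  set Mc := M.map (algebraMap ℝ ℂ) with hMc
  have hdeg : 0 < (Mc.charpoly).degree := by
    rw [Polynomial.degree_eq_natDegree Mc.charpoly_monic.ne_zero]
    rw [Matrix.charpoly_natDegree_eq_dim]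
    simp
    exact_mod_cast Nat.succ_pos n
  obtain ⟨z, hz⟩ := Complex.exists_root hdeg
  have hdet : (Matrix.scalar (Fin (n+1)) z - Mc).det = 0 := by
    rw [← charpoly_eval']; exact hz
  obtain ⟨w, hw0, hww⟩ := (Matrix.exists_mulVec_eq_zero_iff).mpr hdet
  refine ⟨z, w, hw0, ?_, ?_⟩
  · rw [cEigenvalues, ← charpoly_map_eq, Polynomial.mem_roots Mc.charpoly_monic.ne_zero]
    exact hz
  · rw [Matrix.sub_mulVec] at hww
    have hsw : (Matrix.scalar (Fin (n+1)) z).mulVec w = z • w := by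
      ext i
      simp [Matrix.mulVec_diagonal, Matrix.scalar]
    rw [hsw, sub_eq_zero] at hww
    exact hww.symm


lemma mulVec_map_ofReal (B : Matrix (Fin (n+1)) (Fin (n+1)) ℝ) (v : Fin (n+1) → ℝ) :
    (B.map (algebraMap ℝ ℂ)).mulVec (fun i => (v i : ℂ)) = fun i => ((B.mulVec v i : ℝ) : ℂ) := by
  funext i
  simp [Matrix.mulVec, dotProduct, Matrix.map_apply]

lemma norm_ofReal_vec (v : Fin (n+1) → ℝ) :
    ‖(fun i => (v i : ℂ))‖ = ‖v‖ := by
  rw [Pi.norm_def, Pi.norm_def]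
  congr 1
  apply Finset.sup_congr rfl
  intro i _
  simp

section Gelfand

attribute [local instance] Matrix.linftyOpNormedRing Matrix.linftyOpNormedAlgebra

lemma eventually_pow_mulVec_le (M : Matrix (Fin (n+1)) (Fin (n+1)) ℝ)
    (hsp : ∀ z ∈ cEigenvalues n M, ‖z‖ = 1) {q : ℝ} (hq : 1 < q) :
    ∀ᶠ k in atTop, ∀ u : Fin (n+1) → ℝ, ‖(M ^ k).mulVec u‖ ≤ q ^ k * ‖u‖ := by
  set Mc := M.map (algebraMap ℝ ℂ) with hMc
  haveI : CompleteSpace (Matrix (Fin (n+1)) (Fin (n+1)) ℂ) := FiniteDimensional.complete ℂ _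
  have hrad : spectralRadius ℂ Mc ≤ 1 := by
    rw [spectralRadius]
    refine iSup₂_le fun z hz => ?_
    have h1 : ‖z‖ = 1 := hsp z (spectrum_subset_cEigen M z hz)
    have : ‖z‖₊ = 1 := by
      ext
      simpa using h1
    simp [this]
  have hgel := spectrum.pow_nnnorm_pow_one_div_tendsto_nhds_spectralRadius Mc
  have hq0 : (0:ℝ) < q := lt_trans zero_lt_one hq
  have hQ : spectralRadius ℂ Mc < ENNReal.ofReal q := by
    refine lt_of_le_of_lt hrad ?_
    rw [show (1 : ℝ≥0∞) = ENNReal.ofReal 1 by simp]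
    exact ENNReal.ofReal_lt_ofReal_iff_of_nonneg zero_le_one |>.mpr hq
  have hev : ∀ᶠ (k : ℕ) in atTop, (‖Mc ^ k‖₊ : ℝ≥0∞) ^ (1 / (k:ℝ)) < ENNReal.ofReal q :=
    hgel.eventually_lt_const hQ
  filter_upwards [hev, eventually_ge_atTop 1] with k hk hk1
  intro u
  -- convert the ennreal bound to a real bound on ‖Mc ^ k‖
  have hkne : (k : ℝ) ≠ 0 := by positivity
  have h1 : ((‖Mc ^ k‖₊ : ℝ≥0∞) ^ (1 / (k:ℝ))) ^ (k:ℝ) ≤ (ENNReal.ofReal q) ^ (k:ℝ) :=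
    ENNReal.rpow_le_rpow hk.le (by positivity)
  rw [← ENNReal.rpow_mul, one_div, inv_mul_cancel₀ hkne, ENNReal.rpow_one] at h1
  have h2 : (‖Mc ^ k‖₊ : ℝ≥0∞) ≤ ENNReal.ofReal (q ^ k) := by
    rw [ENNReal.rpow_natCast] at h1
    rwa [← ENNReal.ofReal_pow hq0.le] at h1
  have h3 : ‖Mc ^ k‖ ≤ q ^ k := by
    have := ENNReal.toReal_mono (by simp) h2
    simpa [ENNReal.toReal_ofReal (by positivity : (0:ℝ) ≤ q ^ k)] using this
  -- now the vector bound
  have h4 : Mc ^ k = (M ^ k).map (algebraMap ℝ ℂ) := by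
    rw [hMc, ← RingHom.mapMatrix_apply, ← RingHom.mapMatrix_apply, map_pow]
  have h5 : ‖(M ^ k).mulVec u‖ = ‖(Mc ^ k).mulVec (fun i => (u i : ℂ))‖ := by
    rw [h4, mulVec_map_ofReal, norm_ofReal_vec]
  rw [h5]
  calc ‖(Mc ^ k).mulVec (fun i => (u i : ℂ))‖ ≤ ‖Mc ^ k‖ * ‖(fun i => (u i : ℂ))‖ :=
        Matrix.linfty_opNorm_mulVec _ _
    _ ≤ q ^ k * ‖u‖ := by
        rw [norm_ofReal_vec]
        exact mul_le_mul_of_nonneg_right h3 (norm_nonneg _)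

end Gelfand


lemma not_all_orbits_tendsto_zero (M : Matrix (Fin (n+1)) (Fin (n+1)) ℝ)
    (hsp : ∀ z ∈ cEigenvalues n M, ‖z‖ = 1) :
    ¬ (∀ x : Fin (n+1) → ℝ, Tendsto (fun k => (M ^ k).mulVec x) atTop (𝓝 0)) := by
  intro hall
  obtain ⟨z, w, hw0, hzmem, hzw⟩ := exists_complex_eigenpair M
  have hz1 : ‖z‖ = 1 := hsp z hzmem
  set Mc := M.map (algebraMap ℝ ℂ) with hMc
  have hiter : ∀ k : ℕ, (Mc ^ k).mulVec w = z ^ k • w := by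
    intro k
    induction k with
    | zero => simp
    | succ k ih =>
      rw [pow_succ', ← Matrix.mulVec_mulVec, ih, Matrix.mulVec_smul, hzw,
        smul_smul, pow_succ']
      ring_nf
  set wr : Fin (n+1) → ℝ := fun i => (w i).re with hwr
  set wi : Fin (n+1) → ℝ := fun i => (w i).im with hwi
  have hsplit : ∀ (k : ℕ) (j : Fin (n+1)), ((Mc ^ k).mulVec w) j =
      (((M ^ k).mulVec wr j : ℝ) : ℂ) + Complex.I * (((M ^ k).mulVec wi j : ℝ) : ℂ) := by
    intro k j
    have h4 : Mc ^ k = (M ^ k).map (algebraMap ℝ ℂ) := by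
      rw [hMc, ← RingHom.mapMatrix_apply, ← RingHom.mapMatrix_apply, map_pow]
    rw [h4]
    simp only [Matrix.mulVec, dotProduct, Matrix.map_apply]
    have hterm : ∀ i : Fin (n+1), (algebraMap ℝ ℂ) ((M^k) j i) * w i
        = (((M^k) j i * wr i : ℝ) : ℂ) + Complex.I * (((M^k) j i * wi i : ℝ) : ℂ) := by
      intro i
      rw [← Complex.re_add_im (w i)]
      simp only [hwr, hwi, Complex.coe_algebraMap]
      push_cast
      ring
    rw [Finset.sum_congr rfl fun i _ => hterm i, Finset.sum_add_distrib]
    push_cast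
    rw [Finset.mul_sum]
  -- pick a coordinate where w is nonzero
  obtain ⟨j, hj⟩ := Function.ne_iff.mp hw0
  have hre : Tendsto (fun k => (M ^ k).mulVec wr j) atTop (𝓝 0) := by
    have := tendsto_pi_nhds.mp (hall wr) j
    simpa using this
  have him : Tendsto (fun k => (M ^ k).mulVec wi j) atTop (𝓝 0) := by
    have := tendsto_pi_nhds.mp (hall wi) j
    simpa using this
  have hc : Tendsto (fun k => ((Mc ^ k).mulVec w) j) atTop (𝓝 0) := by
    have h1 : Tendsto (fun k => (((M ^ k).mulVec wr j : ℝ) : ℂ)) atTop (𝓝 0) := by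
      have := (Complex.continuous_ofReal.tendsto 0).comp hre
      simpa [Function.comp_def] using this
    have h2 : Tendsto (fun k => Complex.I * (((M ^ k).mulVec wi j : ℝ) : ℂ)) atTop (𝓝 0) := by
      have := ((Complex.continuous_ofReal.tendsto 0).comp him).const_mul Complex.I
      simpa [Function.comp_def] using this
    have := h1.add h2
    simp only [add_zero] at this
    exact Tendsto.congr (fun k => (hsplit k j).symm) this
  have habs : Tendsto (fun k => ‖((Mc ^ k).mulVec w) j‖) atTop (𝓝 0) := by
    have := (continuous_norm.tendsto 0).comp hc
    simpa [Function.comp_def] using this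
  have hconst : ∀ k : ℕ, ‖((Mc ^ k).mulVec w) j‖ = ‖w j‖ := by
    intro k
    rw [hiter k]
    simp [norm_mul, norm_pow, hz1]
  rw [tendsto_congr hconst] at habs
  have : ‖w j‖ = 0 := by
    have h0 : Tendsto (fun _ : ℕ => ‖w j‖) atTop (𝓝 ‖w j‖) :=
      tendsto_const_nhds
    exact tendsto_nhds_unique h0 habs
  exact hj (by simpa using this)


end Spectral

section Engine

variable {d : ℕ} {C : Set (Fin (d + 1) → ℝ)}

lemma exists_fixed_vector (hCne : C.Nonempty) (hCo : IsOpen C) (hCc : Convex ℝ C)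
    (hsc : ∀ t : ℝ, 0 < t → t • C = C)
    (hsharp : closure C ∩ (-(closure C)) = {0})
    (M : Matrix (Fin (d+1)) (Fin (d+1)) ℝ)
    (hM : ∀ x ∈ C, M.mulVec x ∈ C)
    (hsp : ∀ z ∈ cEigenvalues d M, ‖z‖ = 1) :
    ∃ v : Fin (d+1) → ℝ, v ∈ closure C ∧ v ≠ 0 ∧ M.mulVec v = v := by
  classical
  obtain ⟨φ, c, hc, hφ⟩ := exists_pos_functional hCne hCo hCc hsc hsharp
  have hφ0 : ∀ x ∈ closure C, 0 ≤ φ x := fun x hx =>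
    le_trans (by positivity) (hφ x hx)
  obtain ⟨u, huC⟩ := hCne
  have h0C := cone_zero_not_mem hCo hsharp
  have hMk : ∀ (k : ℕ) (x : Fin (d+1) → ℝ), x ∈ C → (M ^ k).mulVec x ∈ C := by
    intro k
    induction k with
    | zero => intro x hx; simpa using hx
    | succ k ih =>
      intro x hx
      have h1 : (M ^ (k+1)).mulVec x = M.mulVec ((M ^ k).mulVec x) := by
        rw [pow_succ', ← Matrix.mulVec_mulVec]
      rw [h1]
      exact hM _ (ih x hx)
  set p : ℕ → (Fin (d+1) → ℝ) := fun k => (M ^ k).mulVec u with hp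
  have hpC : ∀ k, p k ∈ C := fun k => hMk k u huC
  have hpne : ∀ k, p k ≠ 0 := fun k h => h0C (h ▸ hpC k)
  set a : ℕ → ℝ := fun k => φ (p k) with ha
  have hapos : ∀ k, 0 < a k := by
    intro k
    have h1 : 0 < ‖p k‖ := norm_pos_iff.mpr (hpne k)
    exact lt_of_lt_of_le (by positivity) (hφ _ (subset_closure (hpC k)))
  have hnorm_le : ∀ k, ‖p k‖ ≤ a k / c := fun k => by
    rw [le_div_iff₀ hc]
    calc ‖p k‖ * c = c * ‖p k‖ := mul_comm _ _
      _ ≤ a k := hφ _ (subset_closure (hpC k))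
  -- Step 1 : a is not summable
  have hnotsum : ¬ Summable a := by
    intro hsum
    have ha0 : Tendsto a atTop (𝓝 0) := hsum.tendsto_atTop_zero
    have hp0 : Tendsto p atTop (𝓝 0) := by
      refine squeeze_zero_norm hnorm_le ?_
      simpa using ha0.div_const c
    refine not_all_orbits_tendsto_zero M hsp ?_
    intro x
    rcases eq_or_ne x 0 with rfl | hx0
    · simpa [Matrix.mulVec_zero] using (tendsto_const_nhds :
        Tendsto (fun _ : ℕ => (0 : Fin (d+1) → ℝ)) atTop (𝓝 0))
    obtain ⟨r, hr, hball⟩ := Metric.isOpen_iff.mp hCo u huC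
    have hxn : 0 < ‖x‖ := norm_pos_iff.mpr hx0
    set y := (r / (2 * ‖x‖)) • x with hy
    have hyn : ‖y‖ < r := by
      rw [hy, norm_smul, Real.norm_eq_abs, abs_of_pos (by positivity),
        div_mul_eq_mul_div, mul_comm, div_lt_iff₀ (by positivity)]
      nlinarith
    have huy : u + y ∈ C := by
      apply hball
      simp only [Metric.mem_ball, dist_eq_norm]
      simpa using hyn
    have huy' : u - y ∈ C := by
      apply hball
      simp only [Metric.mem_ball, dist_eq_norm]
      simpa [norm_sub_rev] using (by simpa [norm_neg] using hyn : ‖-y‖ < r)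
    have hkey : ∀ k, φ ((M ^ k).mulVec (u + y)) ≤ 2 * a k := by
      intro k
      have h1 : 0 ≤ φ ((M ^ k).mulVec (u - y)) :=
        hφ0 _ (subset_closure (hMk k _ huy'))
      have he : u - y = (2:ℝ) • u - (u + y) := by module
      rw [he, Matrix.mulVec_sub, Matrix.mulVec_smul, map_sub, φ.map_smul,
        smul_eq_mul] at h1
      have ha' : φ ((M ^ k).mulVec u) = a k := rfl
      rw [ha'] at h1
      linarith [h1]
    have hupy0 : Tendsto (fun k => (M ^ k).mulVec (u + y)) atTop (𝓝 0) := by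
      have hb : ∀ k, ‖(M ^ k).mulVec (u + y)‖ ≤ 2 * a k / c := by
        intro k
        have hmem := subset_closure (hMk k _ huy)
        have h1 := hφ _ hmem
        have h2 := hkey k
        rw [le_div_iff₀ hc]
        nlinarith
      exact squeeze_zero_norm hb (by simpa using (ha0.const_mul 2).div_const c)
    have hyy : Tendsto (fun k => (M ^ k).mulVec y) atTop (𝓝 0) := by
      have heq : ∀ k, (M ^ k).mulVec y = (M ^ k).mulVec (u + y) - p k := by
        intro k
        rw [Matrix.mulVec_add]
        simp [hp]
      rw [tendsto_congr heq]
      simpa using hupy0.sub hp0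
    have hxy : x = (2 * ‖x‖ / r) • y := by
      rw [hy, smul_smul]
      rw [show 2 * ‖x‖ / r * (r / (2 * ‖x‖)) = 1 by field_simp]
      simp
    have heq2 : ∀ k, (M ^ k).mulVec x = (2 * ‖x‖ / r) • (M ^ k).mulVec y := by
      intro k
      conv_lhs => rw [hxy]
      rw [Matrix.mulVec_smul]
    rw [tendsto_congr heq2]
    simpa using hyy.const_smul (2 * ‖x‖ / r)
  -- Step 2 : partial sums tend to infinity
  set S : ℕ → ℝ := fun N => ∑ i ∈ Finset.range N, a i with hS
  have hSmono : Monotone S := by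
    intro m n hmn
    exact Finset.sum_le_sum_of_subset_of_nonneg (Finset.range_subset_range.mpr hmn)
      (fun i _ _ => (hapos i).le)
  have hStop : Tendsto S atTop atTop :=
    (not_summable_iff_tendsto_nat_atTop_of_nonneg (fun i => (hapos i).le)).mp hnotsum
  -- Step 3 : dichotomy
  by_cases hgeo : ∃ ε > (0:ℝ), ∃ N₀, ∀ N ≥ N₀, ε * S N ≤ a N
  · exfalso
    obtain ⟨ε, hε, N₀, hN₀⟩ := hgeo
    set N₁ := max N₀ 1 with hN₁
    have hS₁pos : 0 < S N₁ := by
      have h01 : (0:ℕ) ∈ Finset.range N₁ := by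
        have h1 : 1 ≤ N₁ := le_max_right _ _
        exact Finset.mem_range.mpr (by omega)
      calc (0:ℝ) < a 0 := hapos 0
        _ ≤ S N₁ := Finset.single_le_sum (f := a) (fun i _ => (hapos i).le) h01
    have hgrow : ∀ m, (1+ε)^m * S N₁ ≤ S (N₁ + m) := by
      intro m
      induction m with
      | zero => simp
      | succ m ih =>
        have hsucc : S (N₁ + m + 1) = S (N₁ + m) + a (N₁ + m) := Finset.sum_range_succ a _
        have hge : ε * S (N₁ + m) ≤ a (N₁ + m) := hN₀ _ (le_trans (le_max_left _ _) (Nat.le_add_right _ _))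
        have hpow : (0:ℝ) < (1+ε)^m := by positivity
        have : (1+ε)^(m+1) * S N₁ = (1+ε) * ((1+ε)^m * S N₁) := by ring
        rw [show N₁ + (m+1) = N₁ + m + 1 by omega, hsucc, this]
        have hSpos' : (1+ε)^m * S N₁ ≤ S (N₁ + m) := ih
        nlinarith [hSmono (Nat.le_add_right N₁ m), hS₁pos]
    set q := Real.sqrt (1+ε) with hq
    have hqpos : 0 < q := Real.sqrt_pos.mpr (by linarith)
    have hqq : q * q = 1 + ε := Real.mul_self_sqrt (by linarith)
    have hq1 : 1 < q := by nlinarith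
    have hφpos : 0 < ‖φ‖ := by
      have h1 := hφ u (subset_closure huC)
      have h2 : φ u ≤ ‖φ‖ * ‖u‖ :=
        (le_abs_self _).trans (by simpa [Real.norm_eq_abs] using φ.le_opNorm u)
      have h3 : 0 < ‖u‖ := norm_pos_iff.mpr (fun h => h0C (h ▸ huC))
      nlinarith
    have hev := eventually_pow_mulVec_le M hsp hq1
    set K := ‖φ‖ * q ^ N₁ * ‖u‖ / (ε * S N₁) with hK
    have hbig : ∀ᶠ m in atTop, q ^ m ≤ K := by
      have hshift : Tendsto (fun m : ℕ => N₁ + m) atTop atTop :=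
        tendsto_atTop_mono (fun m => Nat.le_add_left m N₁) tendsto_id
      filter_upwards [hshift.eventually hev] with m hm
      have h1 : ε * S (N₁ + m) ≤ a (N₁ + m) := hN₀ _ (le_trans (le_max_left _ _) (Nat.le_add_right _ _))
      have h2 : a (N₁ + m) ≤ ‖φ‖ * ‖p (N₁ + m)‖ :=
        (le_abs_self _).trans
          (by simpa [Real.norm_eq_abs] using φ.le_opNorm (p (N₁ + m)))
      have h3 : ‖p (N₁ + m)‖ ≤ q ^ (N₁ + m) * ‖u‖ := hm u
      have h4 : ε * ((1+ε)^m * S N₁) ≤ ‖φ‖ * (q ^ (N₁+m) * ‖u‖) := by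
        calc ε * ((1+ε)^m * S N₁) ≤ ε * S (N₁ + m) :=
              mul_le_mul_of_nonneg_left (hgrow m) hε.le
          _ ≤ a (N₁ + m) := h1
          _ ≤ ‖φ‖ * ‖p (N₁ + m)‖ := h2
          _ ≤ ‖φ‖ * (q ^ (N₁+m) * ‖u‖) := by
              apply mul_le_mul_of_nonneg_left _ (norm_nonneg _)
              exact h3
      have h5 : (1+ε)^m = q^m * q^m := by
        rw [← hqq, mul_pow]
      rw [h5, pow_add] at h4
      rw [hK]
      rw [le_div_iff₀ (by positivity)]
      have hqm : 0 < q ^ m := by positivity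
      nlinarith [norm_nonneg u]
    have hfar := (tendsto_pow_atTop_atTop_of_one_lt hq1).eventually_gt_atTop K
    obtain ⟨m, hm1, hm2⟩ := (hbig.and hfar).exists
    linarith
  · push_neg at hgeo
    have hsel : ∀ j : ℕ, ∃ N, j ≤ N ∧ a N < ((j:ℝ)+1)⁻¹ * S N := by
      intro j
      obtain ⟨N, hN1, hN2⟩ := hgeo ((j+1:ℝ)⁻¹) (by positivity) j
      exact ⟨N, hN1, hN2⟩
    choose g hg1 hg2 using hsel
    have hSgpos : ∀ j, 0 < S (g j) := by
      intro j
      by_contra h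
      push_neg at h
      have h1 := hg2 j
      have h2 := hapos (g j)
      have h3 : ((j:ℝ)+1)⁻¹ * S (g j) ≤ 0 := by
        apply mul_nonpos_of_nonneg_of_nonpos
        · positivity
        · exact h
      linarith
    set T : ℕ → (Fin (d+1) → ℝ) := fun N => ∑ i ∈ Finset.range N, p i with hT
    have hTclos : ∀ N, T N ∈ closure C := by
      intro N
      induction N with
      | zero => simpa [hT] using cone_zero_mem_closure hsharp
      | succ N ih =>
        have : T (N+1) = T N + p N := Finset.sum_range_succ p N
        rw [this]
        exact cone_closure_add_mem hCc hsc ih (subset_closure (hpC N))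
    have hφT : ∀ N, φ (T N) = S N := fun N => by
      rw [hT, hS, map_sum]
    set y : ℕ → (Fin (d+1) → ℝ) := fun j => (S (g j))⁻¹ • T (g j) with hy
    have hyclos : ∀ j, y j ∈ closure C := fun j =>
      cone_closure_smul_mem hsc (hTclos _) (inv_pos.mpr (hSgpos j))
    have hyφ : ∀ j, φ (y j) = 1 := fun j => by
      show φ ((S (g j))⁻¹ • T (g j)) = 1
      rw [φ.map_smul, smul_eq_mul, hφT]
      field_simp
      exact div_self (ne_of_gt (hSgpos j))
    have hybdd : ∀ j, ‖y j‖ ≤ c⁻¹ := by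
      intro j
      have h1 := hφ _ (hyclos j)
      rw [hyφ j] at h1
      rw [← le_div_iff₀' hc] at h1
      simpa [one_div] using h1
    set Kc := closure C ∩ Metric.closedBall 0 c⁻¹ with hKc
    have hKcomp : IsCompact Kc :=
      (isCompact_closedBall (0 : Fin (d+1) → ℝ) c⁻¹).inter_left isClosed_closure
    have hyK : ∀ j, y j ∈ Kc := fun j =>
      ⟨hyclos j, by simpa [Metric.mem_closedBall, dist_zero_right] using hybdd j⟩
    obtain ⟨v, hvK, ψ, hψ, hψlim⟩ := hKcomp.tendsto_subseq hyK
    have hφv : φ v = 1 := by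
      have h1 : Tendsto (fun j => φ (y (ψ j))) atTop (𝓝 (φ v)) :=
        (φ.continuous.tendsto v).comp hψlim
      have h2 : (fun j => φ (y (ψ j))) = fun _ => (1:ℝ) := funext fun j => hyφ (ψ j)
      rw [h2] at h1
      exact tendsto_nhds_unique h1 tendsto_const_nhds
    have hv0 : v ≠ 0 := by
      intro h
      rw [h] at hφv
      simp at hφv
    have hdiff : ∀ j, M.mulVec (y j) - y j = (S (g j))⁻¹ • (p (g j) - u) := by
      intro j
      have htel : ∀ N, M.mulVec (T N) - T N = p N - p 0 := by
        intro N
        have h1 : M.mulVec (T N) = ∑ i ∈ Finset.range N, p (i+1) := by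
          rw [hT]
          rw [show M.mulVec (∑ i ∈ Finset.range N, p i)
              = ∑ i ∈ Finset.range N, M.mulVec (p i) from
            map_sum M.mulVecLin p (Finset.range N)]
          refine Finset.sum_congr rfl fun i _ => ?_
          rw [hp]
          simp only []
          rw [pow_succ', ← Matrix.mulVec_mulVec]
        rw [h1, hT, ← Finset.sum_sub_distrib]
        exact Finset.sum_range_sub p N
      have hp0 : p 0 = u := by simp [hp]
      rw [hy]
      simp only [Matrix.mulVec_smul]
      rw [← smul_sub, htel (g j), hp0]
    have hbnd : ∀ j, ‖M.mulVec (y j) - y j‖ ≤ c⁻¹ * ((j:ℝ)+1)⁻¹ + ‖u‖ * (S (g j))⁻¹ := by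
      intro j
      rw [hdiff j, norm_smul, Real.norm_eq_abs, abs_of_pos (inv_pos.mpr (hSgpos j))]
      have h1 : ‖p (g j) - u‖ ≤ ‖p (g j)‖ + ‖u‖ := norm_sub_le _ _
      have h2 : ‖p (g j)‖ ≤ a (g j) / c := hnorm_le _
      have h3 : a (g j) ≤ ((j:ℝ)+1)⁻¹ * S (g j) := (hg2 j).le
      have hS' := hSgpos j
      have hSi : 0 < (S (g j))⁻¹ := inv_pos.mpr hS'
      calc (S (g j))⁻¹ * ‖p (g j) - u‖ ≤ (S (g j))⁻¹ * (a (g j) / c + ‖u‖) := by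
            apply mul_le_mul_of_nonneg_left _ hSi.le
            linarith
        _ = (S (g j))⁻¹ * a (g j) / c + ‖u‖ * (S (g j))⁻¹ := by ring
        _ ≤ c⁻¹ * ((j:ℝ)+1)⁻¹ + ‖u‖ * (S (g j))⁻¹ := by
            have h4 : (S (g j))⁻¹ * a (g j) ≤ ((j:ℝ)+1)⁻¹ := by
              rw [inv_mul_le_iff₀ hS']
              calc a (g j) ≤ ((j:ℝ)+1)⁻¹ * S (g j) := h3
                _ = S (g j) * ((j:ℝ)+1)⁻¹ := mul_comm _ _
            have h5 : (S (g j))⁻¹ * a (g j) / c ≤ ((j:ℝ)+1)⁻¹ / c := by gcongr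
            have h6 : ((j:ℝ)+1)⁻¹ / c = c⁻¹ * ((j:ℝ)+1)⁻¹ := by ring
            linarith
    have hSg_top : Tendsto (fun j => S (g (ψ j))) atTop atTop := by
      have hmono : ∀ j, S (ψ j) ≤ S (g (ψ j)) := fun j => hSmono (hg1 (ψ j))
      have h2' : Tendsto (fun j => S (ψ j)) atTop atTop := hStop.comp hψ.tendsto_atTop
      exact tendsto_atTop_mono hmono h2'
    have hbnd0 : Tendsto (fun j => c⁻¹ * ((ψ j : ℝ)+1)⁻¹ + ‖u‖ * (S (g (ψ j)))⁻¹)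
        atTop (𝓝 0) := by
      have h1 : Tendsto (fun j => ((ψ j : ℝ)+1)) atTop atTop := by
        apply tendsto_atTop_add_const_right
        exact tendsto_natCast_atTop_atTop.comp hψ.tendsto_atTop
      have h2 := (h1.inv_tendsto_atTop).const_mul (c⁻¹)
      have h3 := (hSg_top.inv_tendsto_atTop).const_mul ‖u‖
      simpa using h2.add h3
    have hlim0 : Tendsto (fun j => M.mulVec (y (ψ j)) - y (ψ j)) atTop (𝓝 0) :=
      squeeze_zero_norm (fun j => hbnd (ψ j)) hbnd0
    have hcont : Continuous fun x : Fin (d+1) → ℝ => M.mulVec x := by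
      have h := LinearMap.continuous_of_finiteDimensional (Matrix.mulVecLin M)
      exact h
    have hlim1 : Tendsto (fun j => M.mulVec (y (ψ j)) - y (ψ j)) atTop
        (𝓝 (M.mulVec v - v)) :=
      ((hcont.tendsto v).comp hψlim).sub hψlim
    have := tendsto_nhds_unique hlim1 hlim0
    exact ⟨v, hvK.1, hv0, by rwa [sub_eq_zero] at this⟩


end Engine

/-- A parabolic automorphism of a strictly convex cone fixes exactly one boundary ray,
with eigenvalue 1. -/
theorem parabolic_fixes_exactly_one_boundary_ray
    (n : ℕ) (hn : 1 ≤ n) (C : Set (Fin (n + 1) → ℝ)) (hC : IsStrictlyConvexCone n C)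
    (A : GL (Fin (n + 1)) ℝ)
    (hpres : PreservesCone n (↑A) C)
    (hne : ¬ ∃ v ∈ C, ∃ l : ℝ, 0 < l ∧
      (A : Matrix (Fin (n + 1)) (Fin (n + 1)) ℝ).mulVec v = l • v)
    (hpar : ∀ z ∈ cEigenvalues n (↑A), ‖z‖ = 1) :
    ∃ v : Fin (n + 1) → ℝ, v ∈ frontier C ∧ v ≠ 0 ∧
      (A : Matrix (Fin (n + 1)) (Fin (n + 1)) ℝ).mulVec v = v ∧
      ∀ w : Fin (n + 1) → ℝ, w ∈ frontier C → w ≠ 0 →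
        (∃ μ : ℝ, 0 < μ ∧
          (A : Matrix (Fin (n + 1)) (Fin (n + 1)) ℝ).mulVec w = μ • w) →
        ∃ t : ℝ, 0 < t ∧ w = t • v := by
  obtain ⟨⟨hCne, hCo, hCc, hsc, hsharp⟩, hstrict⟩ := hC
  set M : Matrix (Fin (n+1)) (Fin (n+1)) ℝ := ↑A with hMdef
  have hM : ∀ x ∈ C, M.mulVec x ∈ C := by
    intro x hx
    have h1 : M.mulVec x ∈ M.mulVec '' C := Set.mem_image_of_mem _ hx
    rwa [hpres] at h1
  obtain ⟨v, hvcl, hv0, hvfix⟩ :=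
    exists_fixed_vector hCne hCo hCc hsc hsharp M hM hpar
  have hvnotC : v ∉ C := fun hvC => hne ⟨v, hvC, 1, one_pos, by simpa using hvfix⟩
  have hvfront : v ∈ frontier C := by
    rw [hCo.frontier_eq]
    exact ⟨hvcl, hvnotC⟩
  refine ⟨v, hvfront, hv0, hvfix, ?_⟩
  rintro w hwfront hw0 ⟨μ, hμpos, hμw⟩
  have hμmem : ((μ:ℂ)) ∈ cEigenvalues n M := real_eigen_mem_cEigen M μ w hw0 hμw
  have hμ1 : μ = 1 := by
    have h2 := hpar _ hμmem
    rwa [Complex.norm_real, Real.norm_eq_abs, abs_of_pos hμpos] at h2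
  by_contra hcon
  have hsumC := hstrict v w hvfront hwfront hv0 hw0 hcon
  exact hne ⟨v + w, hsumC, 1, one_pos, by rw [Matrix.mulVec_add, hvfix, hμw, hμ1]; simp⟩
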